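/- Let V : [0,∞) → [0,∞) and ζ : [0,∞) → [0,∞) be continuously differentiable functions, let ψ : [0,∞) → [ψ̲, ψ̄] be a function whose values lie in an interval [ψ̲, ψ̄] with ψ̲·ψ̄ > 0, let ι be a real constant, and let ħ be a BL-type Nussbaum function with constant L > max{ψ̲/ψ̄, ψ̄/ψ̲}. If for all t ≥ 0 one has V′(t) ≤ (ψ(t)·ħ(ζ(t)) + ι)·ζ′(t) and ζ′(t) ≥ 0, then both V and ζ are bounded on [0,∞). -/

import Mathlib

open Filter

/-- The positive part `ħ⁺(ζ) = max {0, ħ(ζ)}`. -/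
noncomputable def nussPos (h : ℝ → ℝ) (ζ : ℝ) : ℝ := max 0 (h ζ)

/-- The negative part `ħ⁻(ζ) = max {0, −ħ(ζ)}`. -/
noncomputable def nussNeg (h : ℝ → ℝ) (ζ : ℝ) : ℝ := max 0 (-h ζ)

/-- A continuously differentiable function `ħ : [0,∞) → ℝ` is a *BL-type Nussbaum
function* with constant `L > 1` if
`lim_{ζ→∞} (1/ζ)∫₀^ζ ħ⁺ = ∞`, `lim_{ζ→∞} (1/ζ)∫₀^ζ ħ⁻ = ∞`,
`limsup_{ζ→∞} (∫₀^ζ ħ⁺)/(∫₀^ζ ħ⁻) ≥ L` and `limsup_{ζ→∞} (∫₀^ζ ħ⁻)/(∫₀^ζ ħ⁺) ≥ L`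
(the limsups are taken in the extended reals so that `≥ L` is meaningful even when
the ratios are unbounded). -/
def IsBLNussbaum (h : ℝ → ℝ) (L : ℝ) : Prop :=
  1 < L ∧ ContDiff ℝ 1 h ∧
  Tendsto (fun ζ => (∫ τ in (0:ℝ)..ζ, nussPos h τ) / ζ) atTop atTop ∧
  Tendsto (fun ζ => (∫ τ in (0:ℝ)..ζ, nussNeg h τ) / ζ) atTop atTop ∧
  (L : EReal) ≤ limsup (fun ζ =>
      (((∫ τ in (0:ℝ)..ζ, nussPos h τ) / (∫ τ in (0:ℝ)..ζ, nussNeg h τ) : ℝ) : EReal)) atTop ∧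
  (L : EReal) ≤ limsup (fun ζ =>
      (((∫ τ in (0:ℝ)..ζ, nussNeg h τ) / (∫ τ in (0:ℝ)..ζ, nussPos h τ) : ℝ) : EReal)) atTop

lemma ratio_limsup_contra (P N : ℝ → ℝ) (a b ι C L z0 : ℝ) (ha : 0 < a)
    (hP : Tendsto (fun z => P z / z) atTop atTop)
    (hge : ∀ z, z0 ≤ z → a * N z ≤ b * P z + ι * z + C)
    (hL : b / a < L)
    (hls : (L : EReal) ≤ limsup (fun z => ((N z / P z : ℝ) : EReal)) atTop) : False := by
  set r := b / a with hr
  set ε := (L - r) / 2 with hε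
  have hεpos : 0 < ε := by rw [hε]; linarith
  set K := (|ι| + |C| + 1) / (a * ε) with hK
  have hKpos : 0 < K := by
    apply div_pos (by positivity) (by positivity)
  have hev : ∀ᶠ z in atTop, ((N z / P z : ℝ) : EReal) ≤ ((r + ε : ℝ) : EReal) := by
    filter_upwards [hP.eventually_ge_atTop K, eventually_ge_atTop (1:ℝ),
      eventually_ge_atTop z0] with z h1 h2 h3
    have hz : (0:ℝ) < z := lt_of_lt_of_le one_pos h2
    have hPz : K * z ≤ P z := (le_div_iff₀ hz).mp h1
    have hPpos : 0 < P z := lt_of_lt_of_le (mul_pos hKpos hz) hPz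
    rw [EReal.coe_le_coe_iff, div_le_iff₀ hPpos]
    have hgz := hge z h3
    have hKz2 : a * ε * K * z = (|ι| + |C| + 1) * z := by
      rw [hK]; field_simp
    have hι : ι * z ≤ |ι| * z := mul_le_mul_of_nonneg_right (le_abs_self ι) hz.le
    have hC : C ≤ |C| * z :=
      le_trans (le_abs_self C) (le_mul_of_one_le_right (abs_nonneg C) h2)
    have hint1 : a * ε * (K * z) ≤ a * ε * (P z) :=
      mul_le_mul_of_nonneg_left hPz (by positivity)
    have hb : a * (r * P z) = b * P z := by rw [hr]; field_simp
    have hfinal : a * N z ≤ a * ((r + ε) * P z) := by nlinarith [hgz, hι, hC, hint1, hb, hKz2, hz]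
    exact le_of_mul_le_mul_left hfinal ha
  have hls2 := limsup_le_of_le (by isBoundedDefault) hev
  have hfin := EReal.coe_le_coe_iff.mp (le_trans hls hls2)
  rw [hε] at hfin; linarith

/-- Lemma 1 of the paper, after Chen 2019.
Let `V, ζ : [0,∞) → [0,∞)` be continuously differentiable, let
`ψ : [0,∞) → [ψ̲, ψ̄]` with `ψ̲·ψ̄ > 0`, let `ι ∈ ℝ`, and let `ħ` be a BL-type
Nussbaum function with constant `L > max {ψ̲/ψ̄, ψ̄/ψ̲}`.  If
`V′(t) ≤ (ψ(t)·ħ(ζ(t)) + ι)·ζ′(t)` and `ζ′(t) ≥ 0` for all `t ≥ 0`, then `V` and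
`ζ` are bounded on `[0,∞)`. -/
theorem bl_nussbaum_lemma
    (V ζ ψ h : ℝ → ℝ) (ψlo ψhi ι L : ℝ)
    (hV_smooth : ContDiff ℝ 1 V) (hζ_smooth : ContDiff ℝ 1 ζ)
    (hV_nonneg : ∀ t, 0 ≤ t → 0 ≤ V t)
    (hζ_nonneg : ∀ t, 0 ≤ t → 0 ≤ ζ t)
    (hψ : ∀ t, 0 ≤ t → ψ t ∈ Set.Icc ψlo ψhi)
    (hψprod : 0 < ψlo * ψhi)
    (hL : max (ψlo / ψhi) (ψhi / ψlo) < L)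
    (hNuss : IsBLNussbaum h L)
    (hineq : ∀ t, 0 ≤ t → deriv V t ≤ (ψ t * h (ζ t) + ι) * deriv ζ t)
    (hζ_mono : ∀ t, 0 ≤ t → 0 ≤ deriv ζ t) :
    (∃ C : ℝ, ∀ t, 0 ≤ t → V t ≤ C) ∧ (∃ C : ℝ, ∀ t, 0 ≤ t → ζ t ≤ C) := by
  obtain ⟨hL1, hh_smooth, hPinf, hNinf, hPN, hNP⟩ := hNuss
  have hhc : Continuous h := hh_smooth.continuous
  have hposc : Continuous (nussPos h) := continuous_const.max hhc
  have hnegc : Continuous (nussNeg h) := continuous_const.max hhc.neg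
  set F : ℝ → ℝ := fun z => ψhi * (∫ τ in (0:ℝ)..z, nussPos h τ)
      - ψlo * (∫ τ in (0:ℝ)..z, nussNeg h τ) + ι * z with hFdef
  have hFderiv : ∀ z, HasDerivAt F (ψhi * nussPos h z - ψlo * nussNeg h z + ι) z := by
    intro z
    have hp := (hposc.integral_hasStrictDerivAt 0 z).hasDerivAt
    have hn := (hnegc.integral_hasStrictDerivAt 0 z).hasDerivAt
    have := ((hp.const_mul ψhi).sub (hn.const_mul ψlo)).add ((hasDerivAt_id z).const_mul ι)
    simpa [hFdef, Pi.sub_def, Pi.add_def] using this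
  have hFcont : Continuous F := continuous_iff_continuousAt.mpr fun z => (hFderiv z).continuousAt
  have hζd : ∀ t, HasDerivAt ζ (deriv ζ t) t :=
    fun t => ((hζ_smooth.differentiable one_ne_zero) t).hasDerivAt
  have hVd : ∀ t, HasDerivAt V (deriv V t) t :=
    fun t => ((hV_smooth.differentiable one_ne_zero) t).hasDerivAt
  have hWderiv : ∀ t, HasDerivAt (fun s => F (ζ s))
      ((ψhi * nussPos h (ζ t) - ψlo * nussNeg h (ζ t) + ι) * deriv ζ t) t :=
    fun t => (hFderiv (ζ t)).comp t (hζd t)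
  -- pointwise bound on the right-hand side
  have hbound : ∀ t, 0 ≤ t →
      ψ t * h (ζ t) + ι ≤ ψhi * nussPos h (ζ t) - ψlo * nussNeg h (ζ t) + ι := by
    intro t ht
    obtain ⟨h1, h2⟩ := hψ t ht
    rcases le_or_gt 0 (h (ζ t)) with hc | hc
    · have e1 : nussPos h (ζ t) = h (ζ t) := max_eq_right hc
      have e2 : nussNeg h (ζ t) = 0 := max_eq_left (by linarith)
      rw [e1, e2]; nlinarith
    · have e1 : nussPos h (ζ t) = 0 := max_eq_left hc.le
      have e2 : nussNeg h (ζ t) = -h (ζ t) := max_eq_right (by linarith)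
      rw [e1, e2]; nlinarith
  -- F ∘ ζ − V is monotone on [0, ∞)
  have hmono : MonotoneOn (fun t => F (ζ t) - V t) (Set.Ici 0) := by
    apply monotoneOn_of_deriv_nonneg (convex_Ici 0)
    · exact ((hFcont.comp hζ_smooth.continuous).sub hV_smooth.continuous).continuousOn
    · intro x hx
      exact ((hWderiv x).sub (hVd x)).differentiableAt.differentiableWithinAt
    · intro x hx
      rw [interior_Ici] at hx
      have hx0 : (0:ℝ) ≤ x := le_of_lt hx
      rw [show deriv (fun t => F (ζ t) - V t) x = _ from ((hWderiv x).sub (hVd x)).deriv]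
      have h1 := hineq x hx0
      have h2 := mul_le_mul_of_nonneg_right (hbound x hx0) (hζ_mono x hx0)
      linarith
  have key : ∀ t, 0 ≤ t → V t ≤ (V 0 - F (ζ 0)) + F (ζ t) := by
    intro t ht
    have := hmono Set.self_mem_Ici (Set.mem_Ici.mpr ht) ht
    dsimp only at this
    linarith
  set C0 := V 0 - F (ζ 0) with hC0
  -- ζ is bounded
  have hζbdd : ∃ Z : ℝ, ∀ t, 0 ≤ t → ζ t ≤ Z := by
    by_contra hub
    push_neg at hub
    have range : ∀ z, ζ 0 ≤ z → 0 ≤ C0 + F z := by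
      intro z hz
      obtain ⟨t, ht, hzt⟩ := hub z
      obtain ⟨s, hs, hsz⟩ := intermediate_value_Icc ht hζ_smooth.continuous.continuousOn
        ⟨hz, le_of_lt hzt⟩
      have h0s : (0:ℝ) ≤ s := hs.1
      have hk := key s h0s
      rw [hsz] at hk
      have := hV_nonneg s h0s
      linarith
    have hcases : (0 < ψlo ∧ 0 < ψhi) ∨ (ψlo < 0 ∧ ψhi < 0) := by
      rcases lt_trichotomy ψlo 0 with hc | hc | hc
      · right; exact ⟨hc, by nlinarith⟩
      · exfalso; rw [hc] at hψprod; simp at hψprod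
      · left; exact ⟨hc, by nlinarith⟩
    rcases hcases with ⟨hlo, hhi⟩ | ⟨hlo, hhi⟩
    · refine ratio_limsup_contra (fun z => ∫ τ in (0:ℝ)..z, nussPos h τ)
        (fun z => ∫ τ in (0:ℝ)..z, nussNeg h τ) ψlo ψhi ι C0 L (ζ 0) hlo hPinf
        ?_ (lt_of_le_of_lt (le_max_right _ _) hL) hNP
      intro z hz
      have := range z hz
      rw [hFdef] at this
      simp only at this
      linarith
    · refine ratio_limsup_contra (fun z => ∫ τ in (0:ℝ)..z, nussNeg h τ)
        (fun z => ∫ τ in (0:ℝ)..z, nussPos h τ) (-ψhi) (-ψlo) ι C0 L (ζ 0)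
        (by linarith) hNinf ?_ ?_ hPN
      · intro z hz
        have := range z hz
        rw [hFdef] at this
        simp only at this
        linarith
      · rw [neg_div_neg_eq]
        exact lt_of_le_of_lt (le_max_left _ _) hL
  obtain ⟨Z, hZ⟩ := hζbdd
  refine ⟨?_, ⟨Z, hZ⟩⟩
  -- V is bounded
  set Z' := max Z 0 with hZ'
  obtain ⟨x0, _, hx0⟩ := isCompact_Icc.exists_isMaxOn
    (Set.nonempty_Icc.mpr (le_max_right Z 0)) (hFcont.continuousOn (s := Set.Icc 0 Z'))
  refine ⟨C0 + F x0, fun t ht => ?_⟩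
  have hmem : ζ t ∈ Set.Icc (0:ℝ) Z' :=
    ⟨hζ_nonneg t ht, le_trans (hZ t ht) (le_max_left Z 0)⟩
  have := key t ht
  have hFb : F (ζ t) ≤ F x0 := hx0 hmem
  linarith
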